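/- Let κ ≥ 3 be a cardinal, let x ∈ T_κ and let α ≥ 1 be a countable ordinal with comp(x) ≤ α. For every direction D of T_κ at x, the intersection D ∩ T_κ^{[α]} is non-empty; more precisely, if D consists of those g with g ∧ x ≺ x then D contains all restrictions x|_{(−∞, s)} with s < ρ_x, and if D = {g ∈ T_κ : x ≺ g and g(ρ_x) = c} for some c ∈ C_κ, then the function g : (−∞, ρ_x + 1) → C_κ which agrees with x on (−∞, ρ_x) and takes the constant value c on [ρ_x, ρ_x + 1) satisfies P_g ⊆ P_x ∪ {ρ_x} and lies in T_κ^{[α]} ∩ D. -/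

import Mathlib

open Set Filter

noncomputable section

/-- `C` is a valid label set for the valence cardinal `κ`:
`|C| = κ` if `κ` is infinite and `|C| + 1 = κ` (i.e. `|C| = κ - 1`) if `κ` is finite. -/
def IsLabelSet (κ : Cardinal) (C : Type) : Prop :=
  (Cardinal.aleph0 ≤ κ → Cardinal.mk C = κ) ∧ (κ < Cardinal.aleph0 → Cardinal.mk C + 1 = κ)

/-- An ordinal is countable. -/
def IsCountableOrdinal (o : Ordinal) : Prop := o.card ≤ Cardinal.aleph0

/-- One-step Cantor–Bendixson derivative of a set: its non-isolated points. -/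
def cbStep {X : Type*} [TopologicalSpace X] (A : Set X) : Set X :=
  {x | x ∈ A ∧ AccPt x (Filter.principal A)}

/-- The iterated Cantor–Bendixson derivative of a set. -/
def cbDeriv {X : Type*} [TopologicalSpace X] (A : Set X) (o : Ordinal) : Set X :=
  Ordinal.limitRecOn o A (fun _ ih => cbStep ih)
    (fun o _ ih => ⋂ (o' : Ordinal) (h : o' < o), ih o' h)

/-- The Cantor–Bendixson rank of a set: the least ordinal `γ` such that the `(γ+1)`-st
Cantor–Bendixson derivative equals the `γ`-th one. -/
def cbRank {X : Type*} [TopologicalSpace X] (A : Set X) : Ordinal :=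
  sInf {γ | cbDeriv A (γ + 1) = cbDeriv A γ}

theorem cbDeriv_zero {X : Type*} [TopologicalSpace X] (A : Set X) : cbDeriv A 0 = A :=
  Ordinal.limitRecOn_zero ..

theorem cbDeriv_one {X : Type*} [TopologicalSpace X] (A : Set X) :
    cbDeriv A 1 = cbStep A := by
  have : (1 : Ordinal) = Order.succ 0 := by
    rw [← Ordinal.add_one_eq_succ, zero_add]
  rw [cbDeriv, this, Ordinal.limitRecOn_succ]
  rw [← cbDeriv, cbDeriv_zero]

theorem cbStep_empty {X : Type*} [TopologicalSpace X] : cbStep (∅ : Set X) = ∅ := by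
  ext x; simp [cbStep]

theorem cbRank_empty {X : Type*} [TopologicalSpace X] : cbRank (∅ : Set X) = 0 := by
  refine le_antisymm ?_ zero_le
  refine csInf_le' ?_
  show cbDeriv (∅ : Set X) (0 + 1) = cbDeriv (∅ : Set X) 0
  rw [zero_add, cbDeriv_one, cbDeriv_zero, cbStep_empty]

/-- A point of Dyubina's universal real tree over the label set `C` (with distinguished label
`z`): a function `(-∞, ρ) → C`, encoded as a total function on `ℝ` which takes the value `z`
on `[ρ, ∞)`, which is eventually `z` near `-∞` and piecewise constant from the right. -/
structure UTree (C : Type) (z : C) where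
  ρ : ℝ
  f : ℝ → C
  apply_eq_of_ge : ∀ t, ρ ≤ t → f t = z
  eventually_zero : ∃ s, s ≤ ρ ∧ ∀ t, t < s → f t = z
  piecewise_const : ∀ t, t < ρ → ∃ ε > 0, ∀ u, t ≤ u → u ≤ t + ε → u < ρ → f u = f t

namespace UTree

variable {C : Type} {z : C}

theorem ext' {a b : UTree C z} (h1 : a.ρ = b.ρ) (h2 : a.f = b.f) : a = b := by
  cases a; cases b; cases h1; cases h2; rfl

/-- The partial order `⪯` : `a ⪯ b` iff `a` is the restriction of `b` to `(-∞, ρ_a)`. -/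
protected def le (a b : UTree C z) : Prop :=
  a.ρ ≤ b.ρ ∧ ∀ t, t < a.ρ → a.f t = b.f t

/-- The strict order `≺`. -/
protected def lt (a b : UTree C z) : Prop := a.le b ∧ a ≠ b

/-- The set of times up to which `a` and `b` agree. -/
def agreeSet (a b : UTree C z) : Set ℝ :=
  {t | t ≤ min a.ρ b.ρ ∧ ∀ u, u < t → a.f u = b.f u}

theorem agreeSet_nonempty (a b : UTree C z) : (agreeSet a b).Nonempty := by
  obtain ⟨s₁, hs₁, h₁⟩ := a.eventually_zero
  obtain ⟨s₂, hs₂, h₂⟩ := b.eventually_zero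
  refine ⟨min s₁ s₂, le_min ((min_le_left _ _).trans hs₁) ((min_le_right _ _).trans hs₂), ?_⟩
  intro u hu
  rw [h₁ u (lt_of_lt_of_le hu (min_le_left _ _)), h₂ u (lt_of_lt_of_le hu (min_le_right _ _))]

theorem agreeSet_bddAbove (a b : UTree C z) : BddAbove (agreeSet a b) :=
  ⟨min a.ρ b.ρ, fun _ ht => ht.1⟩

/-- `ρ_{a ∧ b}`, the height of the wedge of `a` and `b`. -/
def wedgeρ (a b : UTree C z) : ℝ := sSup (agreeSet a b)

theorem wedgeρ_le_min (a b : UTree C z) : wedgeρ a b ≤ min a.ρ b.ρ :=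
  csSup_le (agreeSet_nonempty a b) fun _ ht => ht.1

theorem agree_of_lt_wedgeρ (a b : UTree C z) {u : ℝ} (hu : u < wedgeρ a b) :
    a.f u = b.f u := by
  obtain ⟨t, ht, hut⟩ := exists_lt_of_lt_csSup (agreeSet_nonempty a b) hu
  exact ht.2 u hut

theorem le_wedgeρ {a b : UTree C z} {t : ℝ} (ht : t ∈ agreeSet a b) : t ≤ wedgeρ a b :=
  le_csSup (agreeSet_bddAbove a b) ht

theorem wedgeρ_comm (a b : UTree C z) : wedgeρ a b = wedgeρ b a := by
  unfold wedgeρ agreeSet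
  congr 1
  ext t
  constructor <;> rintro ⟨h1, h2⟩ <;>
    exact ⟨by rwa [min_comm], fun u hu => (h2 u hu).symm⟩

theorem wedgeρ_self (a : UTree C z) : wedgeρ a a = a.ρ := by
  refine le_antisymm ((wedgeρ_le_min a a).trans (by simp)) ?_
  exact le_wedgeρ ⟨by simp, fun _ _ => rfl⟩

/-- Restriction of `a` to `(-∞, s)` for `s ≤ ρ_a`. -/
def restrict (a : UTree C z) (s : ℝ) (hs : s ≤ a.ρ) : UTree C z where
  ρ := s
  f := fun t => if t < s then a.f t else z
  apply_eq_of_ge := fun t ht => by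
    show (if t < s then a.f t else z) = z
    rw [if_neg (not_lt.mpr ht)]
  eventually_zero := by
    obtain ⟨s', hs', h'⟩ := a.eventually_zero
    refine ⟨min s' s, min_le_right _ _, fun t ht => ?_⟩
    show (if t < s then a.f t else z) = z
    by_cases h : t < s
    · rw [if_pos h]; exact h' t (lt_of_lt_of_le ht (min_le_left _ _))
    · rw [if_neg h]
  piecewise_const := fun t ht => by
    obtain ⟨ε, hε, h⟩ := a.piecewise_const t (lt_of_lt_of_le ht hs)
    refine ⟨ε, hε, fun u hu1 hu2 hu3 => ?_⟩
    show (if u < s then a.f u else z) = (if t < s then a.f t else z)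
    rw [if_pos hu3, if_pos ht]
    exact h u hu1 hu2 (lt_of_lt_of_le hu3 hs)

/-- The wedge `a ∧ b`: the restriction of `a` to `(-∞, ρ_{a ∧ b})`. -/
def wedge (a b : UTree C z) : UTree C z :=
  a.restrict (wedgeρ a b) ((wedgeρ_le_min a b).trans (min_le_left _ _))

theorem min_wedgeρ_le (a b c : UTree C z) :
    min (wedgeρ a b) (wedgeρ b c) ≤ wedgeρ a c := by
  refine le_wedgeρ ⟨le_min ?_ ?_, fun u hu => ?_⟩
  · exact (min_le_left _ _).trans ((wedgeρ_le_min a b).trans (min_le_left _ _))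
  · exact (min_le_right _ _).trans ((wedgeρ_le_min b c).trans (min_le_right _ _))
  · have h1 : a.f u = b.f u :=
      agree_of_lt_wedgeρ a b (lt_of_lt_of_le hu (min_le_left _ _))
    have h2 : b.f u = c.f u :=
      agree_of_lt_wedgeρ b c (lt_of_lt_of_le hu (min_le_right _ _))
    exact h1.trans h2

/-- The metric `d(a,b) = ρ_a + ρ_b - 2 ρ_{a ∧ b}` on the universal real tree. -/
instance : MetricSpace (UTree C z) where
  dist a b := a.ρ + b.ρ - 2 * wedgeρ a b
  dist_self a := by simp [wedgeρ_self]; ring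
  dist_comm a b := by simp only [wedgeρ_comm a b]; ring
  dist_triangle a b c := by
    have hmin := min_wedgeρ_le a b c
    have h1 : wedgeρ a b ≤ b.ρ := (wedgeρ_le_min a b).trans (min_le_right _ _)
    have h2 : wedgeρ b c ≤ b.ρ := (wedgeρ_le_min b c).trans (min_le_left _ _)
    rcases min_cases (wedgeρ a b) (wedgeρ b c) with ⟨heq, hle⟩ | ⟨heq, hle⟩ <;>
      (rw [heq] at hmin
       show a.ρ + c.ρ - 2 * wedgeρ a c ≤ (a.ρ + b.ρ - 2 * wedgeρ a b) + (b.ρ + c.ρ - 2 * wedgeρ b c)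
       linarith)
  eq_of_dist_eq_zero := by
    intro a b h
    have h1 : wedgeρ a b ≤ a.ρ := (wedgeρ_le_min a b).trans (min_le_left _ _)
    have h2 : wedgeρ a b ≤ b.ρ := (wedgeρ_le_min a b).trans (min_le_right _ _)
    have hd : a.ρ + b.ρ - 2 * wedgeρ a b = 0 := h
    have ha : a.ρ = wedgeρ a b := by linarith
    have hb : b.ρ = wedgeρ a b := by linarith
    refine ext' (ha.trans hb.symm) (funext fun t => ?_)
    by_cases ht : t < wedgeρ a b
    · exact agree_of_lt_wedgeρ a b ht
    · rw [a.apply_eq_of_ge t (ha.le.trans (not_lt.mp ht)),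
        b.apply_eq_of_ge t (hb.le.trans (not_lt.mp ht))]

theorem dist_def (a b : UTree C z) : dist a b = a.ρ + b.ρ - 2 * wedgeρ a b := rfl

/-- The point `c_ℓ`: the constant function `(-∞, ℓ) → C` with value `z`. -/
def cconst (ℓ : ℝ) : UTree C z where
  ρ := ℓ
  f := fun _ => z
  apply_eq_of_ge := fun _ _ => rfl
  eventually_zero := ⟨ℓ, le_refl ℓ, fun _ _ => rfl⟩
  piecewise_const := fun _ _ => ⟨1, one_pos, fun _ _ _ _ => rfl⟩

/-- The set of points at which `a` is locally non-constant from the left, whose closure is the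
set `P_a`. -/
def badSet (a : UTree C z) : Set ℝ :=
  {t | t < a.ρ ∧ ∀ ε > 0, ∃ u ∈ Icc (t - ε) t, ∃ v ∈ Icc (t - ε) t, a.f u ≠ a.f v}

/-- The set `P_a`. -/
def Pset (a : UTree C z) : Set ℝ := closure (badSet a)

/-- The complexity of `a`: the Cantor–Bendixson rank of `P_a`. -/
def comp (a : UTree C z) : Ordinal := cbRank (Pset a)

/-- The complexity of a pair `a ≺ b`: the Cantor–Bendixson rank of `P_b ∩ [ρ_a, ρ_b]`. -/
def pairComp (a b : UTree C z) : Ordinal := cbRank (Pset b ∩ Icc a.ρ b.ρ)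

/-- `τ_a`: the maximum of all `s ≤ ρ_a` such that `a` is `z` below `s`. -/
def tau (a : UTree C z) : ℝ := sSup {s | s ≤ a.ρ ∧ ∀ t, t < s → a.f t = z}

/-- The tree `T_κ^{[α]}` of points of complexity at most `α`. -/
def level (z : C) (α : Ordinal) : Set (UTree C z) := {a | comp a ≤ α}

theorem Pset_cconst (ℓ : ℝ) : Pset (cconst ℓ : UTree C z) = ∅ := by
  have : badSet (cconst ℓ : UTree C z) = ∅ := by
    ext t
    simp only [badSet, mem_setOf_eq, mem_empty_iff_false, iff_false, not_and]
    intro _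
    push_neg
    exact ⟨1, one_pos, fun u _ v _ => rfl⟩
  rw [Pset, this, closure_empty]

theorem comp_cconst (ℓ : ℝ) : comp (cconst ℓ : UTree C z) = 0 := by
  rw [comp, Pset_cconst, cbRank_empty]

theorem cconst_mem_level {ℓ : ℝ} (α : Ordinal) : (cconst ℓ : UTree C z) ∈ level z α := by
  show comp _ ≤ α
  rw [comp_cconst]
  exact zero_le

/-- The canonical line `L_0 = {c_ℓ : ℓ ∈ ℝ}`. -/
def L0 (z : C) : Set (UTree C z) := Set.range fun ℓ => (cconst ℓ : UTree C z)

/-- The extension of `a` by the label `c` on `[ρ_a, ρ_a + 1)`. -/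
def extend (a : UTree C z) (c : C) : UTree C z where
  ρ := a.ρ + 1
  f := fun t => if t < a.ρ then a.f t else if t < a.ρ + 1 then c else z
  apply_eq_of_ge := fun t ht => by
    show (if t < a.ρ then a.f t else if t < a.ρ + 1 then c else z) = z
    rw [if_neg (not_lt.mpr (by linarith)), if_neg (not_lt.mpr ht)]
  eventually_zero := by
    obtain ⟨s, hs, h⟩ := a.eventually_zero
    refine ⟨min s a.ρ, by have := min_le_right s a.ρ; linarith, fun t ht => ?_⟩
    show (if t < a.ρ then a.f t else if t < a.ρ + 1 then c else z) = z
    rw [if_pos (lt_of_lt_of_le ht (min_le_right _ _))]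
    exact h t (lt_of_lt_of_le ht (min_le_left _ _))
  piecewise_const := by
    intro t ht
    by_cases htρ : t < a.ρ
    · obtain ⟨ε, hε, h⟩ := a.piecewise_const t htρ
      refine ⟨min ε ((a.ρ - t) / 2), lt_min hε (by linarith), fun u hu1 hu2 _ => ?_⟩
      have hu3 : u < a.ρ := by
        have := hu2.trans (add_le_add le_rfl (min_le_right _ _))
        linarith
      show (if u < a.ρ then a.f u else if u < a.ρ + 1 then c else z) =
        (if t < a.ρ then a.f t else if t < a.ρ + 1 then c else z)
      rw [if_pos hu3, if_pos htρ]
      exact h u hu1 (hu2.trans (add_le_add le_rfl (min_le_left _ _))) hu3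
    · refine ⟨(a.ρ + 1 - t) / 2, by linarith, fun u hu1 hu2 _ => ?_⟩
      have h1 : ¬u < a.ρ := by push_neg at htρ ⊢; linarith
      have h2 : u < a.ρ + 1 := by linarith
      show (if u < a.ρ then a.f u else if u < a.ρ + 1 then c else z) =
        (if t < a.ρ then a.f t else if t < a.ρ + 1 then c else z)
      rw [if_neg h1, if_pos h2, if_neg htρ, if_pos ht]

end UTree

/-- A subset of a metric space is (geodesically) convex if it contains every point
metrically between two of its points. -/
def MetricConvex {X : Type*} [MetricSpace X] (S : Set X) : Prop :=
  ∀ x ∈ S, ∀ y ∈ S, ∀ w, dist x w + dist w y = dist x y → w ∈ S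

/-- `D` is a direction at `x`: a connected component of the complement of `{x}`. -/
def IsDirectionAt {X : Type*} [TopologicalSpace X] (x : X) (D : Set X) : Prop :=
  ∃ y, y ≠ x ∧ D = connectedComponentIn {w | w ≠ x} y

/-- The valence of a space at a point: the number of connected components of the
complement of that point. -/
def valenceAt {X : Type*} [TopologicalSpace X] (x : X) : Cardinal :=
  Cardinal.mk {D : Set X // IsDirectionAt x D}

/-- A real tree: a geodesic metric space in which any two points are joined by a unique arc. -/
def IsRealTree (X : Type*) [MetricSpace X] : Prop :=
  (∀ x y : X, ∃ γ : ℝ → X, γ 0 = x ∧ γ (dist x y) = y ∧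
      ∀ s ∈ Icc (0 : ℝ) (dist x y), ∀ t ∈ Icc (0 : ℝ) (dist x y),
        dist (γ s) (γ t) = |s - t|) ∧
  (∀ (x y : X) (γ₁ γ₂ : Path x y), Function.Injective γ₁ → Function.Injective γ₂ →
      Set.range γ₁ = Set.range γ₂)
section CBLemmas

variable {X : Type*} [TopologicalSpace X]

theorem cbStep_subset (A : Set X) : cbStep A ⊆ A := fun _ hx => hx.1

theorem cbStep_mono {A B : Set X} (h : A ⊆ B) : cbStep A ⊆ cbStep B :=
  fun _ hx => ⟨h hx.1, hx.2.mono (Filter.principal_mono.2 h)⟩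

theorem cbDeriv_succ (A : Set X) (o : Ordinal) :
    cbDeriv A (Order.succ o) = cbStep (cbDeriv A o) :=
  Ordinal.limitRecOn_succ ..

theorem cbDeriv_limit (A : Set X) {o : Ordinal} (h : Order.IsSuccLimit o) :
    cbDeriv A o = ⋂ (o' : Ordinal) (_ : o' < o), cbDeriv A o' :=
  Ordinal.limitRecOn_limit _ _ _ _ h

theorem not_accPt_singleton [T1Space X] (x p : X) : ¬ AccPt x (Filter.principal {p}) := by
  rw [accPt_iff_nhds]
  push_neg
  by_cases hxp : x = p
  · subst hxp
    exact ⟨Set.univ, Filter.univ_mem, fun y hy => by simpa using hy.2⟩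
  · exact ⟨{p}ᶜ, (isOpen_compl_singleton).mem_nhds hxp, fun y hy => absurd hy.2 hy.1⟩

theorem accPt_insert_iff [T1Space X] {A : Set X} {p x : X} :
    AccPt x (Filter.principal (insert p A)) ↔ AccPt x (Filter.principal A) := by
  constructor
  · intro h
    rw [accPt_iff_nhds] at h ⊢
    intro U hU
    by_cases hxp : x = p
    · obtain ⟨y, ⟨hyU, hyin⟩, hyx⟩ := h U hU
      rcases hyin with rfl | hyA
      · exact absurd hxp.symm hyx
      · exact ⟨y, ⟨hyU, hyA⟩, hyx⟩
    · obtain ⟨y, ⟨⟨hyU, hyp⟩, hyin⟩, hyx⟩ :=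
        h (U ∩ {p}ᶜ) (Filter.inter_mem hU ((isOpen_compl_singleton).mem_nhds hxp))
      rcases hyin with rfl | hyA
      · exact absurd rfl hyp
      · exact ⟨y, ⟨hyU, hyA⟩, hyx⟩
  · intro h
    exact h.mono (Filter.principal_mono.2 (Set.subset_insert _ _))

theorem cbStep_insert [T1Space X] {A : Set X} (hA : IsClosed A) {p : X} (hp : p ∉ A) :
    cbStep (insert p A) = cbStep A := by
  ext y
  simp only [cbStep, Set.mem_setOf_eq, accPt_insert_iff]
  constructor
  · rintro ⟨hy, hacc⟩
    rcases hy with rfl | hyA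
    · exfalso
      rw [accPt_iff_nhds] at hacc
      obtain ⟨w, ⟨hwU, hwA⟩, -⟩ := hacc Aᶜ (hA.isOpen_compl.mem_nhds hp)
      exact hwU hwA
    · exact ⟨hyA, hacc⟩
  · rintro ⟨hy, hacc⟩
    exact ⟨Set.mem_insert_of_mem _ hy, hacc⟩

theorem cbDeriv_insert [T1Space X] {A : Set X} (hA : IsClosed A) {p : X} (hp : p ∉ A)
    (β : Ordinal) (hβ : 1 ≤ β) : cbDeriv (insert p A) β = cbDeriv A β := by
  induction β using Ordinal.limitRecOn with
  | zero => exact absurd hβ (by norm_num)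
  | add_one o ih =>
    rw [Ordinal.add_one_eq_succ]
    rw [cbDeriv_succ, cbDeriv_succ]
    rcases eq_zero_or_pos o with rfl | ho
    · rw [cbDeriv_zero, cbDeriv_zero]
      exact cbStep_insert hA hp
    · rw [ih (Order.one_le_iff_pos.mpr ho)]
  | limit o ho ih =>
    rw [cbDeriv_limit _ ho, cbDeriv_limit _ ho]
    have h1 : (1 : Ordinal) < o := by
      simpa [Ordinal.succ_zero] using ho.succ_lt ho.pos
    have hsub : (⋂ (o' : Ordinal) (_ : o' < o), cbDeriv A o') ⊆ A := by
      intro w hw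
      have := Set.mem_iInter₂.1 hw 1 h1
      rw [show (1:Ordinal) = Order.succ 0 from (Ordinal.succ_zero).symm, cbDeriv_succ,
        cbDeriv_zero] at this
      exact cbStep_subset A this
    ext w
    simp only [Set.mem_iInter]
    constructor
    · intro hw o' ho'
      rcases eq_zero_or_pos o' with rfl | ho'pos
      · rw [cbDeriv_zero]
        have h1' := hw 1 h1
        rw [ih 1 h1 le_rfl, show (1:Ordinal) = Order.succ 0 from (Ordinal.succ_zero).symm,
          cbDeriv_succ, cbDeriv_zero] at h1'
        exact cbStep_subset A h1'
      · have := hw o' ho'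
        rwa [ih o' ho' (Order.one_le_iff_pos.mpr ho'pos)] at this
    · intro hw o' ho'
      rcases eq_zero_or_pos o' with rfl | ho'pos
      · rw [cbDeriv_zero]
        exact Set.mem_insert_of_mem _ (by
          have := hw 0 ho.pos
          rwa [cbDeriv_zero] at this)
      · rw [ih o' ho' (Order.one_le_iff_pos.mpr ho'pos)]
        exact hw o' ho'

end CBLemmas
section RankLemmas

variable {X : Type*} [TopologicalSpace X]

theorem cbDeriv_one' (A : Set X) : cbDeriv A 1 = cbStep A := cbDeriv_one A

theorem cbDeriv_two (A : Set X) : cbDeriv A 2 = cbStep (cbStep A) := by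
  have : (2 : Ordinal) = Order.succ 1 := by
    rw [← Ordinal.add_one_eq_succ]; norm_num
  rw [this, cbDeriv_succ, cbDeriv_one]

theorem cbRank_insert_le [T1Space X] {A : Set X} (hA : IsClosed A) {α : Ordinal}
    (h1 : (1 : Ordinal) ≤ α) (hr : cbRank A ≤ α) (p : X) : cbRank (insert p A) ≤ α := by
  by_cases hp : p ∈ A
  · rwa [Set.insert_eq_self.mpr hp]
  by_cases hS : {γ : Ordinal | cbDeriv A (γ + 1) = cbDeriv A γ}.Nonempty
  · have hmem : cbDeriv A (cbRank A + 1) = cbDeriv A (cbRank A) := csInf_mem hS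
    rcases eq_zero_or_pos (cbRank A) with h0 | hpos
    · -- A is perfect; show 1 works for insert
      have hAperf : cbStep A = A := by
        rw [h0, zero_add, cbDeriv_one, cbDeriv_zero] at hmem
        exact hmem
      refine le_trans (csInf_le' ?_) h1
      show cbDeriv (insert p A) (1 + 1) = cbDeriv (insert p A) 1
      have h2 : ((1 : Ordinal) + 1) = 2 := by norm_num
      rw [h2, cbDeriv_insert hA hp 2 (by norm_num), cbDeriv_insert hA hp 1 le_rfl,
        cbDeriv_two, cbDeriv_one, hAperf]
      exact hAperf
    · -- cbRank A ≥ 1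
      refine le_trans (csInf_le' ?_) hr
      show cbDeriv (insert p A) (cbRank A + 1) = cbDeriv (insert p A) (cbRank A)
      have hge : (1 : Ordinal) ≤ cbRank A := Order.one_le_iff_pos.mpr hpos
      rw [cbDeriv_insert hA hp _ (le_trans hge le_self_add),
        cbDeriv_insert hA hp _ hge]
      exact hmem
  · -- stabilization set of A empty; then so is that of insert p A
    have hS' : ¬ {γ : Ordinal | cbDeriv (insert p A) (γ + 1) = cbDeriv (insert p A) γ}.Nonempty := by
      rintro ⟨γ, hγ⟩
      rcases eq_zero_or_pos γ with rfl | hpos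
      · simp only [Set.mem_setOf_eq, zero_add, cbDeriv_one, cbDeriv_zero] at hγ
        have : p ∈ cbStep (insert p A) := hγ.symm ▸ Set.mem_insert p A
        rw [cbStep_insert hA hp] at this
        exact hp (cbStep_subset A this)
      · have hge : (1 : Ordinal) ≤ γ := Order.one_le_iff_pos.mpr hpos
        refine hS ⟨γ, ?_⟩
        have h1' : cbDeriv (insert p A) (γ + 1) = cbDeriv (insert p A) γ := hγ
        rw [cbDeriv_insert hA hp _ (le_trans hge le_self_add),
          cbDeriv_insert hA hp _ hge] at h1'
        exact h1'
    rw [cbRank, Set.not_nonempty_iff_eq_empty.mp hS', Ordinal.sInf_empty]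
    exact zero_le

end RankLemmas
namespace UTree

variable {C : Type} {z : C}

theorem restrict_f_eq (a : UTree C z) {s : ℝ} (hs : s ≤ a.ρ) (t : ℝ) :
    (a.restrict s hs).f t = if t < s then a.f t else z := rfl

theorem restrict_ρ_eq (a : UTree C z) {s : ℝ} (hs : s ≤ a.ρ) : (a.restrict s hs).ρ = s := rfl

theorem restrict_self (a : UTree C z) : a.restrict a.ρ le_rfl = a := by
  refine ext' rfl (funext fun t => ?_)
  rw [restrict_f_eq]
  by_cases h : t < a.ρ
  · rw [if_pos h]
  · rw [if_neg h, a.apply_eq_of_ge t (not_lt.mp h)]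

theorem wedgeρ_restrict (a : UTree C z) {s t : ℝ} (hs : s ≤ a.ρ) (ht : t ≤ a.ρ) :
    wedgeρ (a.restrict s hs) (a.restrict t ht) = min s t := by
  refine le_antisymm (wedgeρ_le_min _ _) (le_wedgeρ ⟨le_rfl, fun u hu => ?_⟩)
  rw [restrict_f_eq, restrict_f_eq, if_pos (lt_of_lt_of_le hu (min_le_left _ _)),
    if_pos (lt_of_lt_of_le hu (min_le_right _ _))]

theorem dist_restrict (a : UTree C z) {s t : ℝ} (hs : s ≤ a.ρ) (ht : t ≤ a.ρ) :
    dist (a.restrict s hs) (a.restrict t ht) = |s - t| := by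
  rw [dist_def, wedgeρ_restrict, restrict_ρ_eq, restrict_ρ_eq]
  rcases le_total s t with h | h
  · rw [min_eq_left h, abs_of_nonpos (by linarith)]; ring
  · rw [min_eq_right h, abs_of_nonneg (by linarith)]; ring

/-- The "descending" path of restrictions of `a`. -/
def rfun (a : UTree C z) (s : ℝ) : UTree C z := a.restrict (min s a.ρ) (min_le_right _ _)

theorem rfun_eq (a : UTree C z) {s : ℝ} (hs : s ≤ a.ρ) : rfun a s = a.restrict s hs := by
  have hm : min s a.ρ = s := min_eq_left hs
  refine ext' (by rw [rfun, restrict_ρ_eq, restrict_ρ_eq, hm]) (funext fun t => ?_)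
  rw [rfun, restrict_f_eq, restrict_f_eq, hm]

theorem rfun_self (a : UTree C z) : rfun a a.ρ = a := by
  rw [rfun_eq a le_rfl, restrict_self]

theorem lipschitz_rfun (a : UTree C z) : LipschitzWith 1 (rfun a) := by
  refine LipschitzWith.of_dist_le_mul fun s t => ?_
  rw [NNReal.coe_one, one_mul, rfun, rfun, dist_restrict, Real.dist_eq]
  have h1 : min s a.ρ - min t a.ρ ≤ |s - t| := by
    have : min s a.ρ ≤ min (t + |s - t|) (a.ρ + |s - t|) :=
      min_le_min (by linarith [le_abs_self (s - t)]) (by linarith [abs_nonneg (s - t)])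
    rw [min_add_add_right] at this
    linarith
  have h2 : min t a.ρ - min s a.ρ ≤ |s - t| := by
    have : min t a.ρ ≤ min (s + |s - t|) (a.ρ + |s - t|) :=
      min_le_min (by linarith [neg_abs_le (s - t)]) (by linarith [abs_nonneg (s - t)])
    rw [min_add_add_right] at this
    linarith
  exact abs_le.mpr ⟨by linarith, by linarith⟩

theorem extend_ρ (a : UTree C z) (c : C) : (a.extend c).ρ = a.ρ + 1 := rfl

theorem extend_f_lt (a : UTree C z) (c : C) {t : ℝ} (h : t < a.ρ) :
    (a.extend c).f t = a.f t := if_pos h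

theorem extend_f_mid (a : UTree C z) (c : C) {t : ℝ} (h1 : a.ρ ≤ t) (h2 : t < a.ρ + 1) :
    (a.extend c).f t = c := by
  show (if t < a.ρ then a.f t else if t < a.ρ + 1 then c else z) = c
  rw [if_neg (not_lt.mpr h1), if_pos h2]

theorem badSet_subset_extend (a : UTree C z) (c : C) : badSet a ⊆ badSet (a.extend c) := by
  rintro t ⟨htρ, hbad⟩
  refine ⟨by rw [extend_ρ]; linarith, fun ε hε => ?_⟩
  obtain ⟨u, hu, v, hv, huv⟩ := hbad ε hε
  refine ⟨u, hu, v, hv, ?_⟩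
  rw [extend_f_lt a c (lt_of_le_of_lt hu.2 htρ), extend_f_lt a c (lt_of_le_of_lt hv.2 htρ)]
  exact huv

theorem badSet_extend_subset (a : UTree C z) (c : C) :
    badSet (a.extend c) ⊆ insert a.ρ (badSet a) := by
  rintro t ⟨htρ, hbad⟩
  rw [extend_ρ] at htρ
  rcases lt_trichotomy t a.ρ with h | h | h
  · refine Set.mem_insert_of_mem _ ⟨h, fun ε hε => ?_⟩
    obtain ⟨u, hu, v, hv, huv⟩ := hbad ε hε
    refine ⟨u, hu, v, hv, ?_⟩
    rw [← extend_f_lt a c (lt_of_le_of_lt hu.2 h), ← extend_f_lt a c (lt_of_le_of_lt hv.2 h)]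
    exact huv
  · rw [h]; exact Set.mem_insert _ _
  · exfalso
    obtain ⟨u, hu, v, hv, huv⟩ := hbad (t - a.ρ) (by linarith)
    have hu' : a.ρ ≤ u := by have := hu.1; linarith
    have hv' : a.ρ ≤ v := by have := hv.1; linarith
    rw [extend_f_mid a c hu' (lt_of_le_of_lt hu.2 htρ),
      extend_f_mid a c hv' (lt_of_le_of_lt hv.2 htρ)] at huv
    exact huv rfl

theorem Pset_subset_extend (a : UTree C z) (c : C) : Pset a ⊆ Pset (a.extend c) :=
  closure_mono (badSet_subset_extend a c)

theorem Pset_extend_subset (a : UTree C z) (c : C) :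
    Pset (a.extend c) ⊆ insert a.ρ (Pset a) := by
  refine (closure_mono (badSet_extend_subset a c)).trans ?_
  rw [Set.insert_eq, Set.insert_eq, closure_union, closure_singleton]
  exact fun w hw => hw

theorem comp_extend_le (a : UTree C z) (c : C) {α : Ordinal} (h1 : (1 : Ordinal) ≤ α)
    (ha : comp a ≤ α) : comp (a.extend c) ≤ α := by
  by_cases hρ : a.ρ ∈ Pset (a.extend c)
  · have hEq : Pset (a.extend c) = insert a.ρ (Pset a) :=
      subset_antisymm (Pset_extend_subset a c)
        (Set.insert_subset hρ (Pset_subset_extend a c))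
    rw [comp, hEq]
    exact cbRank_insert_le isClosed_closure h1 ha _
  · have hEq : Pset (a.extend c) = Pset a := by
      refine subset_antisymm (fun w hw => ?_) (Pset_subset_extend a c)
      rcases Pset_extend_subset a c hw with rfl | hw'
      · exact absurd hw hρ
      · exact hw'
    rw [comp, hEq]
    exact ha

end UTree
namespace UTree

variable {C : Type} {z : C}

theorem wedge_ρ (a b : UTree C z) : (wedge a b).ρ = wedgeρ a b := rfl

theorem wedge_f (a b : UTree C z) (t : ℝ) :
    (wedge a b).f t = if t < wedgeρ a b then a.f t else z := rfl

end UTree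

/-- Every direction of `T_κ` at a point `x` of complexity at most `α` meets `T_κ^{[α]}`:
the direction `{g : g ∧ x ≺ x}` contains every restriction `x|_{(-∞,s)}` with `s < ρ_x`,
and for each label `c` the extension of `x` by `c` on `[ρ_x, ρ_x + 1)` satisfies
`P_g ⊆ P_x ∪ {ρ_x}` and lies in `T_κ^{[α]} ∩ D_c`. -/
theorem stmt18 (κ : Cardinal) (hκ : 3 ≤ κ) (C : Type) (z : C) (hC : IsLabelSet κ C)
    (α : Ordinal) (hα1 : 1 ≤ α) (hαc : IsCountableOrdinal α)
    (x : UTree C z) (hx : UTree.comp x ≤ α) :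
    (∀ D : Set (UTree C z), IsDirectionAt x D → (D ∩ UTree.level z α).Nonempty) ∧
    (∀ s : ℝ, ∀ hs : s < x.ρ,
      x.restrict s hs.le ∈ {g : UTree C z | (UTree.wedge g x).lt x}) ∧
    (∀ c : C,
      UTree.Pset (x.extend c) ⊆ UTree.Pset x ∪ {x.ρ} ∧
      x.extend c ∈ UTree.level z α ∧
      x.extend c ∈ {g : UTree C z | x.lt g ∧ g.f x.ρ = c} ∧
      (x.extend c).ρ = x.ρ + 1 ∧
      (∀ t : ℝ, t < x.ρ → (x.extend c).f t = x.f t) ∧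
      (∀ t : ℝ, x.ρ ≤ t → t < x.ρ + 1 → (x.extend c).f t = c)) := by
  refine ⟨?_, ?_, ?_⟩
  · -- directions
    rintro D ⟨y, hyx, rfl⟩
    by_cases h : ∃ s : ℝ, ∃ hs : s ≤ y.ρ, y.restrict s hs = x
    · obtain ⟨s, hs, hrx⟩ := h
      have hρx : x.ρ = s := by rw [← hrx, UTree.restrict_ρ_eq]
      have hslt : s < y.ρ := by
        rcases lt_or_eq_of_le hs with h' | h'
        · exact h'
        · exfalso
          apply hyx
          subst h'
          rw [UTree.restrict_self] at hrx
          exact hrx.symm ▸ rfl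
      obtain ⟨ε, hε, hconst⟩ := y.piecewise_const s hslt
      set ε' := min ε (min 1 ((y.ρ - s) / 2)) with hε'def
      have hε'pos : 0 < ε' := lt_min hε (lt_min one_pos (by linarith))
      have hε'1 : ε' ≤ 1 := (min_le_right _ _).trans (min_le_left _ _)
      have hε'ε : ε' ≤ ε := min_le_left _ _
      have hε'ρ : s + ε' < y.ρ := by
        have : ε' ≤ (y.ρ - s) / 2 := (min_le_right _ _).trans (min_le_right _ _)
        linarith
      set c := y.f s with hcdef
      set g := x.extend c with hgdef
      have hgρ : g.ρ = s + 1 := by rw [hgdef, UTree.extend_ρ, hρx]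
      have hw2 : UTree.rfun g (s + ε') = UTree.rfun y (s + ε') := by
        rw [UTree.rfun_eq g (by rw [hgρ]; linarith), UTree.rfun_eq y (le_of_lt hε'ρ)]
        refine UTree.ext' rfl (funext fun t => ?_)
        rw [UTree.restrict_f_eq, UTree.restrict_f_eq]
        by_cases ht : t < s + ε'
        · rw [if_pos ht, if_pos ht]
          by_cases hts : t < s
          · rw [hgdef, UTree.extend_f_lt x c (by rw [hρx]; exact hts)]
            rw [← hrx, UTree.restrict_f_eq, if_pos hts]
          · rw [hgdef, UTree.extend_f_mid x c (by rw [hρx]; exact not_lt.mp hts)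
              (by rw [hρx]; linarith)]
            exact (hconst t (not_lt.mp hts) (by linarith) (by linarith)).symm
        · rw [if_neg ht, if_neg ht]
      set F1 := UTree.rfun y '' Set.Icc (s + ε') y.ρ with hF1def
      set F2 := UTree.rfun g '' Set.Icc (s + ε') (s + 1) with hF2def
      have hF1c : IsPreconnected F1 :=
        isPreconnected_Icc.image _ ((UTree.lipschitz_rfun y).continuous.continuousOn)
      have hF2c : IsPreconnected F2 :=
        isPreconnected_Icc.image _ ((UTree.lipschitz_rfun g).continuous.continuousOn)
      have hw01 : UTree.rfun y (s + ε') ∈ F1 := ⟨s + ε', ⟨le_rfl, le_of_lt hε'ρ⟩, rfl⟩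
      have hw02 : UTree.rfun y (s + ε') ∈ F2 := ⟨s + ε', ⟨le_rfl, by linarith⟩, hw2⟩
      have hyF1 : y ∈ F1 := ⟨y.ρ, ⟨le_of_lt hε'ρ, le_rfl⟩, UTree.rfun_self y⟩
      have hgF2 : g ∈ F2 := ⟨s + 1, ⟨by linarith, le_rfl⟩, by rw [← hgρ, UTree.rfun_self]⟩
      have hsub : F1 ∪ F2 ⊆ {w : UTree C z | w ≠ x} := by
        rintro w (⟨t, ht, rfl⟩ | ⟨t, ht, rfl⟩)
        · intro hcon
          have hρeq : (UTree.rfun y t).ρ = x.ρ := by rw [hcon]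
          have : (UTree.rfun y t).ρ = min t y.ρ := rfl
          rw [this, min_eq_left ht.2, hρx] at hρeq
          have := ht.1
          linarith
        · intro hcon
          have hρeq : (UTree.rfun g t).ρ = x.ρ := by rw [hcon]
          have : (UTree.rfun g t).ρ = min t g.ρ := rfl
          rw [this, min_eq_left (by rw [hgρ]; exact ht.2), hρx] at hρeq
          have := ht.1
          linarith
      have hconn : IsPreconnected (F1 ∪ F2) :=
        IsPreconnected.union _ hw01 hw02 hF1c hF2c
      have hgD : g ∈ connectedComponentIn {w : UTree C z | w ≠ x} y :=
        (hconn.subset_connectedComponentIn (Set.mem_union_left _ hyF1) hsub)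
          (Set.mem_union_right _ hgF2)
      exact ⟨g, hgD, UTree.comp_extend_le x c hα1 hx⟩
    · push_neg at h
      obtain ⟨s₀, hs₀, hz0⟩ := y.eventually_zero
      set F := UTree.rfun y '' Set.Icc s₀ y.ρ with hFdef
      have hFc : IsPreconnected F :=
        isPreconnected_Icc.image _ ((UTree.lipschitz_rfun y).continuous.continuousOn)
      have hyF : y ∈ F := ⟨y.ρ, ⟨hs₀, le_rfl⟩, UTree.rfun_self y⟩
      have hcF : UTree.cconst s₀ ∈ F := by
        refine ⟨s₀, ⟨le_rfl, hs₀⟩, ?_⟩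
        rw [UTree.rfun_eq y hs₀]
        refine UTree.ext' rfl (funext fun t => ?_)
        rw [UTree.restrict_f_eq]
        show _ = z
        by_cases ht : t < s₀
        · rw [if_pos ht]
          exact hz0 t ht
        · rw [if_neg ht]
      have hsub : F ⊆ {w : UTree C z | w ≠ x} := by
        rintro w ⟨t, ht, rfl⟩
        exact h (min t y.ρ) (min_le_right _ _)
      exact ⟨UTree.cconst s₀, (hFc.subset_connectedComponentIn hyF hsub) hcF,
        UTree.cconst_mem_level α⟩
  · -- restrictions
    intro s hs
    set g := x.restrict s hs.le with hgdef
    have hwρ : UTree.wedgeρ g x = s := by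
      refine le_antisymm ?_ (UTree.le_wedgeρ ⟨?_, ?_⟩)
      · have h1 := UTree.wedgeρ_le_min g x
        have h2 : g.ρ = s := by rw [hgdef, UTree.restrict_ρ_eq]
        rw [h2, min_eq_left hs.le] at h1
        exact h1
      · have h2 : g.ρ = s := by rw [hgdef, UTree.restrict_ρ_eq]
        rw [h2, min_eq_left hs.le]
      · intro u hu
        rw [hgdef, UTree.restrict_f_eq, if_pos hu]
    show (UTree.wedge g x).lt x
    refine ⟨⟨?_, ?_⟩, ?_⟩
    · rw [UTree.wedge_ρ, hwρ]
      exact hs.le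
    · intro t ht
      rw [UTree.wedge_ρ, hwρ] at ht
      rw [UTree.wedge_f, if_pos (by rwa [hwρ]), hgdef, UTree.restrict_f_eq, if_pos ht]
    · intro hcon
      have : (UTree.wedge g x).ρ = x.ρ := by rw [hcon]
      rw [UTree.wedge_ρ, hwρ] at this
      linarith
  · -- extensions
    intro c
    refine ⟨?_, UTree.comp_extend_le x c hα1 hx,
      ⟨⟨⟨by rw [UTree.extend_ρ]; linarith, fun t ht => (UTree.extend_f_lt x c ht).symm⟩, ?_⟩,
        UTree.extend_f_mid x c le_rfl (by linarith)⟩, rfl,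
      fun t ht => UTree.extend_f_lt x c ht, fun t h1 h2 => UTree.extend_f_mid x c h1 h2⟩
    · intro w hw
      rcases UTree.Pset_extend_subset x c hw with rfl | hw'
      · exact Or.inr rfl
      · exact Or.inl hw'
    · intro hcon
      have := congrArg UTree.ρ hcon
      rw [UTree.extend_ρ] at this
      linarith

end
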